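/- For any two policies π and π̂ on an MDP with discount factor γ ∈ [0,1), the difference in expected discounted returns satisfies J(π̂) − J(π) = (1/(1−γ)) · E_{s∼d^{π̂}} E_{a∼π̂(·|s)} [A^π(s,a)], where d^{π̂} is the normalized discounted state visitation distribution of π̂ and A^π is the advantage function of π. -/

import Mathlib

open scoped BigOperators

/-- A finite infinite-horizon discounted MDP. -/
structure MDP (S A : Type*) [Fintype S] [Fintype A] where
  p : S → A → S → ℝ
  r : S → A → ℝ
  ρ0 : S → ℝ
  γ : ℝ
  hγ0 : 0 ≤ γ
  hγ1 : γ < 1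
  hp_nonneg : ∀ s a s', 0 ≤ p s a s'
  hp_sum : ∀ s a, ∑ s', p s a s' = 1
  hρ_nonneg : ∀ s, 0 ≤ ρ0 s
  hρ_sum : ∑ s, ρ0 s = 1

/-- A (stationary, stochastic) policy. -/
def IsPolicy {S A : Type*} [Fintype S] [Fintype A] (π : S → A → ℝ) : Prop :=
  (∀ s a, 0 ≤ π s a) ∧ ∀ s, ∑ a, π s a = 1

variable {S A : Type*} [Fintype S] [Fintype A] [DecidableEq S]

/-- State distribution at time `t` under policy `π`, starting from `init`. -/
noncomputable def stateDist (M : MDP S A) (π : S → A → ℝ) (init : S → ℝ) : ℕ → S → ℝ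
  | 0 => init
  | (t + 1) => fun s' => ∑ s, ∑ a, stateDist M π init t s * π s a * M.p s a s'

/-- Expected discounted return of `π` from initial distribution `init`. -/
noncomputable def Jfrom (M : MDP S A) (π : S → A → ℝ) (init : S → ℝ) : ℝ :=
  ∑' t : ℕ, M.γ ^ t * ∑ s, ∑ a, stateDist M π init t s * π s a * M.r s a

/-- Expected discounted return `J(π)`. -/
noncomputable def Jret (M : MDP S A) (π : S → A → ℝ) : ℝ := Jfrom M π M.ρ0

/-- State value function `V^π(s)`. -/
noncomputable def Vval (M : MDP S A) (π : S → A → ℝ) (s0 : S) : ℝ :=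
  Jfrom M π (fun s => if s = s0 then (1:ℝ) else 0)

/-- State-action value function `Q^π(s,a)`. -/
noncomputable def Qval (M : MDP S A) (π : S → A → ℝ) (s : S) (a : A) : ℝ :=
  M.r s a + M.γ * ∑ s', M.p s a s' * Vval M π s'

/-- Advantage function `A^π(s,a) = Q^π(s,a) - V^π(s)`. -/
noncomputable def Adv (M : MDP S A) (π : S → A → ℝ) (s : S) (a : A) : ℝ :=
  Qval M π s a - Vval M π s

/-- Normalized discounted state visitation distribution
`d^π(s) = (1-γ) ∑_t γ^t P(s_t = s)`. -/
noncomputable def dvisit (M : MDP S A) (π : S → A → ℝ) (s : S) : ℝ :=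
  (1 - M.γ) * ∑' t : ℕ, M.γ ^ t * stateDist M π M.ρ0 t s

set_option linter.unusedSectionVars false

section Aux
variable (M : MDP S A) (π : S → A → ℝ)

/-- summability of geometric-bounded sequences -/
lemma summable_geom_bounded {B : ℝ} {c : ℕ → ℝ} (hc : ∀ t, |c t| ≤ B) :
    Summable (fun t => M.γ ^ t * c t) := by
  refine Summable.of_norm_bounded (g := fun t => B * M.γ ^ t)
    ((summable_geometric_of_lt_one M.hγ0 M.hγ1).mul_left B) (fun t => ?_)
  have h1 : ‖M.γ ^ t * c t‖ = M.γ ^ t * |c t| := by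
    rw [norm_mul, Real.norm_eq_abs, Real.norm_eq_abs, abs_pow, abs_of_nonneg M.hγ0]
  rw [h1]
  show M.γ ^ t * |c t| ≤ B * M.γ ^ t
  rw [mul_comm B]
  exact mul_le_mul_of_nonneg_left (hc t) (pow_nonneg M.hγ0 t)

lemma stateDist_nonneg (hπ : IsPolicy π) {init : S → ℝ} (h0 : ∀ s, 0 ≤ init s) :
    ∀ t s, 0 ≤ stateDist M π init t s := by
  intro t
  induction t with
  | zero => exact h0
  | succ t ih =>
    intro s'
    refine Finset.sum_nonneg fun s _ => Finset.sum_nonneg fun a _ => ?_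
    exact mul_nonneg (mul_nonneg (ih s) (hπ.1 s a)) (M.hp_nonneg s a s')

lemma stateDist_sum (hπ : IsPolicy π) {init : S → ℝ} (h1 : ∑ s, init s = 1) :
    ∀ t, ∑ s, stateDist M π init t s = 1 := by
  intro t
  induction t with
  | zero => exact h1
  | succ t ih =>
    show ∑ s', ∑ s, ∑ a, stateDist M π init t s * π s a * M.p s a s' = 1
    rw [Finset.sum_comm]
    have : ∀ s ∈ Finset.univ, (∑ s' : S, ∑ a, stateDist M π init t s * π s a * M.p s a s')
        = stateDist M π init t s := by
      intro s _
      rw [Finset.sum_comm]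
      have : ∀ a ∈ Finset.univ, (∑ s' : S, stateDist M π init t s * π s a * M.p s a s')
          = stateDist M π init t s * π s a := by
        intro a _
        rw [← Finset.mul_sum, M.hp_sum, mul_one]
      rw [Finset.sum_congr rfl this, ← Finset.mul_sum, hπ.2, mul_one]
    rw [Finset.sum_congr rfl this, ih]

lemma stateDist_le_one (hπ : IsPolicy π) {init : S → ℝ} (h0 : ∀ s, 0 ≤ init s)
    (h1 : ∑ s, init s = 1) (t : ℕ) (s : S) : stateDist M π init t s ≤ 1 := by
  calc stateDist M π init t s ≤ ∑ s', stateDist M π init t s' :=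
        Finset.single_le_sum (fun s' _ => stateDist_nonneg M π hπ h0 t s') (Finset.mem_univ s)
    _ = 1 := stateDist_sum M π hπ h1 t

end Aux

set_option linter.unusedSectionVars false

section Aux2
variable (M : MDP S A) (π : S → A → ℝ)

noncomputable def rew (init : S → ℝ) (t : ℕ) : ℝ :=
  ∑ s, ∑ a, stateDist M π init t s * π s a * M.r s a

noncomputable def deltaD (s0 : S) : S → ℝ := fun s => if s = s0 then (1:ℝ) else 0

lemma deltaD_nonneg (s0 s : S) : 0 ≤ deltaD (S := S) s0 s := by
  unfold deltaD; split <;> norm_num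

lemma deltaD_sum (s0 : S) : ∑ s, deltaD (S := S) s0 s = 1 := by
  simp [deltaD]

lemma Jfrom_eq_tsum (init : S → ℝ) :
    Jfrom M π init = ∑' t : ℕ, M.γ ^ t * rew M π init t := rfl

lemma pol_le_one (hπ : IsPolicy π) (s : S) (a : A) : π s a ≤ 1 := by
  calc π s a ≤ ∑ a', π s a' := Finset.single_le_sum (fun a' _ => hπ.1 s a') (Finset.mem_univ a)
    _ = 1 := hπ.2 s

lemma rew_bound (hπ : IsPolicy π) {init : S → ℝ} (h0 : ∀ s, 0 ≤ init s)
    (h1 : ∑ s, init s = 1) (t : ℕ) :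
    |rew M π init t| ≤ ∑ s, ∑ a, |M.r s a| := by
  unfold rew
  calc |∑ s, ∑ a, stateDist M π init t s * π s a * M.r s a|
      ≤ ∑ s, |∑ a, stateDist M π init t s * π s a * M.r s a| := Finset.abs_sum_le_sum_abs _ _
    _ ≤ ∑ s, ∑ a, |stateDist M π init t s * π s a * M.r s a| :=
        Finset.sum_le_sum fun s _ => Finset.abs_sum_le_sum_abs _ _
    _ ≤ ∑ s, ∑ a, |M.r s a| := by
        refine Finset.sum_le_sum fun s _ => Finset.sum_le_sum fun a _ => ?_
        rw [abs_mul, abs_mul]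
        have hd0 := stateDist_nonneg M π hπ h0 t s
        have hd1 := stateDist_le_one M π hπ h0 h1 t s
        have hp0 := hπ.1 s a
        have hp1 := pol_le_one π hπ s a
        calc |stateDist M π init t s| * |π s a| * |M.r s a|
            ≤ 1 * 1 * |M.r s a| := by
              apply mul_le_mul_of_nonneg_right _ (abs_nonneg _)
              apply mul_le_mul <;> simp [abs_of_nonneg, hd0, hp0, hd1, hp1, abs_le]
          _ = |M.r s a| := by ring

lemma summable_rew (hπ : IsPolicy π) {init : S → ℝ} (h0 : ∀ s, 0 ≤ init s)
    (h1 : ∑ s, init s = 1) : Summable (fun t => M.γ ^ t * rew M π init t) :=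
  summable_geom_bounded M (rew_bound M π hπ h0 h1)

lemma triple_comm (f : S → A → S → ℝ) :
    ∑ s, ∑ a, ∑ s0, f s a s0 = ∑ s0, ∑ s, ∑ a, f s a s0 := by
  calc ∑ s, ∑ a, ∑ s0, f s a s0 = ∑ s, ∑ s0, ∑ a, f s a s0 :=
        Finset.sum_congr rfl (fun s _ => Finset.sum_comm)
    _ = ∑ s0, ∑ s, ∑ a, f s a s0 := Finset.sum_comm

lemma stateDist_delta (init : S → ℝ) (t : ℕ) (s : S) :
    stateDist M π init t s = ∑ s0, init s0 * stateDist M π (deltaD s0) t s := by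
  induction t generalizing s with
  | zero =>
    show init s = ∑ s0, init s0 * deltaD s0 s
    simp [deltaD, mul_ite, Finset.sum_ite_eq]
  | succ t ih =>
    show (∑ s', ∑ a, stateDist M π init t s' * π s' a * M.p s' a s)
        = ∑ s0, init s0 * ∑ s', ∑ a, stateDist M π (deltaD s0) t s' * π s' a * M.p s' a s
    have : ∀ s' a, stateDist M π init t s' * π s' a * M.p s' a s
        = ∑ s0, init s0 * (stateDist M π (deltaD s0) t s' * π s' a * M.p s' a s) := by
      intro s' a
      rw [ih s', Finset.sum_mul, Finset.sum_mul]
      exact Finset.sum_congr rfl fun s0 _ => by ring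
    simp only [this]
    rw [triple_comm]
    refine Finset.sum_congr rfl fun s0 _ => ?_
    rw [Finset.mul_sum]
    refine Finset.sum_congr rfl fun s' _ => ?_
    rw [Finset.mul_sum]

lemma rew_delta (init : S → ℝ) (t : ℕ) :
    rew M π init t = ∑ s0, init s0 * rew M π (deltaD s0) t := by
  unfold rew
  have : ∀ s a, stateDist M π init t s * π s a * M.r s a
      = ∑ s0, init s0 * (stateDist M π (deltaD s0) t s * π s a * M.r s a) := by
    intro s a
    rw [stateDist_delta M π init t s, Finset.sum_mul, Finset.sum_mul]
    exact Finset.sum_congr rfl fun s0 _ => by ring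
  simp only [this]
  rw [triple_comm]
  refine Finset.sum_congr rfl fun s0 _ => ?_
  rw [Finset.mul_sum]
  refine Finset.sum_congr rfl fun s _ => ?_
  rw [Finset.mul_sum]

lemma Vval_eq (s0 : S) : Vval M π s0 = Jfrom M π (deltaD s0) := rfl

lemma Jfrom_linear (hπ : IsPolicy π) (init : S → ℝ) :
    Jfrom M π init = ∑ s0, init s0 * Vval M π s0 := by
  rw [Jfrom_eq_tsum]
  have h1 : ∀ t, M.γ ^ t * rew M π init t
      = ∑ s0, init s0 * (M.γ ^ t * rew M π (deltaD s0) t) := by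
    intro t
    rw [rew_delta M π init t, Finset.mul_sum]
    exact Finset.sum_congr rfl fun s0 _ => by ring
  simp only [h1]
  rw [Summable.tsum_finsetSum (fun s0 _ => Summable.mul_left _
    (summable_rew M π hπ (deltaD_nonneg s0) (deltaD_sum s0)))]
  exact Finset.sum_congr rfl fun s0 _ => by
    rw [tsum_mul_left, Vval_eq, Jfrom_eq_tsum]

end Aux2

section Aux3
variable (M : MDP S A) (π : S → A → ℝ)

lemma stateDist_shift (init : S → ℝ) (t : ℕ) :
    stateDist M π init (t + 1) = stateDist M π (stateDist M π init 1) t := by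
  induction t with
  | zero => rfl
  | succ t ih =>
    show (fun s' => ∑ s, ∑ a, stateDist M π init (t+1) s * π s a * M.p s a s') = _
    rw [ih]
    rfl

lemma stateDist_one (init : S → ℝ) (s' : S) :
    stateDist M π init 1 s' = ∑ s, ∑ a, init s * π s a * M.p s a s' := rfl

lemma stateDist_one_nonneg (hπ : IsPolicy π) {init : S → ℝ} (h0 : ∀ s, 0 ≤ init s) (s : S) :
    0 ≤ stateDist M π init 1 s := stateDist_nonneg M π hπ h0 1 s

lemma stateDist_one_sum (hπ : IsPolicy π) {init : S → ℝ} (h1 : ∑ s, init s = 1) :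
    ∑ s, stateDist M π init 1 s = 1 := stateDist_sum M π hπ h1 1

lemma Jfrom_rec (hπ : IsPolicy π) {init : S → ℝ} (h0 : ∀ s, 0 ≤ init s)
    (h1 : ∑ s, init s = 1) :
    Jfrom M π init = rew M π init 0 + M.γ * Jfrom M π (stateDist M π init 1) := by
  rw [Jfrom_eq_tsum]
  have hs := summable_rew M π hπ h0 h1
  rw [Summable.tsum_eq_zero_add hs]
  have he : ∀ t : ℕ, M.γ ^ (t+1) * rew M π init (t+1)
      = M.γ * (M.γ ^ t * rew M π (stateDist M π init 1) t) := by
    intro t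
    have : rew M π init (t+1) = rew M π (stateDist M π init 1) t := by
      unfold rew
      rw [stateDist_shift]
    rw [this]; ring
  simp only [he, pow_zero, one_mul]
  rw [tsum_mul_left, Jfrom_eq_tsum]

lemma Vval_bellman (hπ : IsPolicy π) (s0 : S) :
    Vval M π s0 = ∑ a, π s0 a * Qval M π s0 a := by
  have h := Jfrom_rec M π hπ (deltaD_nonneg s0) (deltaD_sum s0)
  rw [← Vval_eq] at h
  have hr0 : rew M π (deltaD s0) 0 = ∑ a, π s0 a * M.r s0 a := by
    unfold rew
    show (∑ s, ∑ a, deltaD s0 s * π s a * M.r s a) = _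
    simp [deltaD, ite_mul, Finset.sum_ite_eq]
  have hd1 : ∀ s', stateDist M π (deltaD s0) 1 s' = ∑ a, π s0 a * M.p s0 a s' := by
    intro s'
    rw [stateDist_one]
    simp [deltaD, ite_mul, Finset.sum_ite_eq]
  have hJ1 : Jfrom M π (stateDist M π (deltaD s0) 1)
      = ∑ s', (∑ a, π s0 a * M.p s0 a s') * Vval M π s' := by
    rw [Jfrom_linear M π hπ]
    exact Finset.sum_congr rfl fun s' _ => by rw [hd1]
  rw [hr0, hJ1] at h
  rw [h]
  unfold Qval
  have l1 : ∀ s', (∑ a, π s0 a * M.p s0 a s') * Vval M π s'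
      = ∑ a, π s0 a * (M.p s0 a s' * Vval M π s') := by
    intro s'; rw [Finset.sum_mul]; exact Finset.sum_congr rfl fun a _ => by ring
  have key : M.γ * ∑ s', (∑ a, π s0 a * M.p s0 a s') * Vval M π s'
      = ∑ a, π s0 a * (M.γ * ∑ s', M.p s0 a s' * Vval M π s') := by
    simp only [l1, Finset.mul_sum]
    rw [Finset.sum_comm]
    refine Finset.sum_congr rfl fun a _ => Finset.sum_congr rfl fun s' _ => by ring
  rw [key, ← Finset.sum_add_distrib]
  exact Finset.sum_congr rfl fun a _ => by ring

end Aux3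

section Aux4
variable (M : MDP S A) (π πhat : S → A → ℝ)

lemma step_identity (hπhat : IsPolicy πhat) (t : ℕ) :
    ∑ s, stateDist M πhat M.ρ0 t s * ∑ a, πhat s a * Adv M π s a
    = rew M πhat M.ρ0 t
      + M.γ * ∑ s', stateDist M πhat M.ρ0 (t+1) s' * Vval M π s'
      - ∑ s, stateDist M πhat M.ρ0 t s * Vval M π s := by
  have hA : ∀ s, ∑ a, πhat s a * Adv M π s a
      = ∑ a, πhat s a * Qval M π s a - Vval M π s := by
    intro s
    unfold Adv
    simp only [mul_sub]
    rw [Finset.sum_sub_distrib, ← Finset.sum_mul, hπhat.2, one_mul]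
  simp only [hA, mul_sub]
  rw [Finset.sum_sub_distrib]
  congr 1
  -- ∑ s, ρ t s * ∑ a, πhat s a * Qval = rew + γ * ∑ s', ρ (t+1) s' * V s'
  unfold Qval
  have e1 : ∀ s, stateDist M πhat M.ρ0 t s *
      ∑ a, πhat s a * (M.r s a + M.γ * ∑ s', M.p s a s' * Vval M π s')
      = ∑ a, (stateDist M πhat M.ρ0 t s * πhat s a * M.r s a
          + ∑ s', M.γ * (stateDist M πhat M.ρ0 t s * πhat s a
              * M.p s a s' * Vval M π s')) := by
    intro s
    rw [Finset.mul_sum]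
    refine Finset.sum_congr rfl fun a _ => ?_
    have e2 : ∑ s', M.γ * (stateDist M πhat M.ρ0 t s * πhat s a
          * M.p s a s' * Vval M π s')
        = M.γ * (stateDist M πhat M.ρ0 t s * πhat s a
            * ∑ s', M.p s a s' * Vval M π s') := by
      rw [Finset.mul_sum, Finset.mul_sum]
      refine Finset.sum_congr rfl fun s' _ => by ring
    rw [e2]; ring
  simp only [e1, Finset.sum_add_distrib]
  congr 1
  rw [triple_comm, Finset.mul_sum]
  refine Finset.sum_congr rfl fun s' _ => ?_
  have h1 : stateDist M πhat M.ρ0 (t+1) s'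
      = ∑ s, ∑ a, stateDist M πhat M.ρ0 t s * πhat s a * M.p s a s' := rfl
  rw [h1, Finset.sum_mul, Finset.mul_sum]
  refine Finset.sum_congr rfl fun s _ => ?_
  rw [Finset.sum_mul, Finset.mul_sum]

end Aux4


/-- performance difference lemma, Kakade & Langford:
`J(π̂) - J(π) = (1/(1-γ)) E_{s ∼ d^{π̂}} E_{a ∼ π̂(·|s)} [A^π(s,a)]`. -/
theorem performance_difference (M : MDP S A) (π πhat : S → A → ℝ)
    (hπ : IsPolicy π) (hπhat : IsPolicy πhat) :
    Jret M πhat - Jret M π =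
      (1 / (1 - M.γ)) * ∑ s, dvisit M πhat s * ∑ a, πhat s a * Adv M π s a := by
  have hρ0 : ∀ t s, 0 ≤ stateDist M πhat M.ρ0 t s :=
    stateDist_nonneg M πhat hπhat M.hρ_nonneg
  have habs : ∀ t s, |stateDist M πhat M.ρ0 t s| ≤ 1 := fun t s => by
    rw [abs_of_nonneg (hρ0 t s)]
    exact stateDist_le_one M πhat hπhat M.hρ_nonneg M.hρ_sum t s
  have hγne : (1 : ℝ) - M.γ ≠ 0 := by have := M.hγ1; intro h; linarith
  -- bound on the inner expectation
  have hwb : ∀ (w : S → ℝ), (∀ s, |w s| ≤ 1) → ∀ (f : S → ℝ),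
      |∑ s, w s * f s| ≤ ∑ s, |f s| := by
    intro w hw f
    calc |∑ s, w s * f s| ≤ ∑ s, |w s * f s| := Finset.abs_sum_le_sum_abs _ _
      _ ≤ ∑ s, |f s| := by
          refine Finset.sum_le_sum fun s _ => ?_
          rw [abs_mul]
          calc |w s| * |f s| ≤ 1 * |f s| :=
                mul_le_mul_of_nonneg_right (hw s) (abs_nonneg _)
            _ = |f s| := one_mul _
  have hGsum : Summable (fun t => M.γ ^ t *
      ∑ s, stateDist M πhat M.ρ0 t s * ∑ a, πhat s a * Adv M π s a) :=
    summable_geom_bounded M (fun t => hwb _ (habs t) _)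
  have hRsum : Summable (fun t => M.γ ^ t * rew M πhat M.ρ0 t) :=
    summable_rew M πhat hπhat M.hρ_nonneg M.hρ_sum
  -- Step A : RHS = ∑' t, γ^t * G t
  have hsum_s : ∀ s, Summable (fun t => M.γ ^ t *
      (stateDist M πhat M.ρ0 t s * ∑ a, πhat s a * Adv M π s a)) := by
    intro s
    refine summable_geom_bounded M (B := |∑ a, πhat s a * Adv M π s a|) (fun t => ?_)
    rw [abs_mul]
    calc |stateDist M πhat M.ρ0 t s| * |∑ a, πhat s a * Adv M π s a|
        ≤ 1 * |∑ a, πhat s a * Adv M π s a| :=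
          mul_le_mul_of_nonneg_right (habs t s) (abs_nonneg _)
      _ = _ := one_mul _
  have hA : (1 / (1 - M.γ)) * ∑ s, dvisit M πhat s * ∑ a, πhat s a * Adv M π s a
      = ∑' t, M.γ ^ t * ∑ s, stateDist M πhat M.ρ0 t s * ∑ a, πhat s a * Adv M π s a := by
    have e1 : ∑ s, dvisit M πhat s * ∑ a, πhat s a * Adv M π s a
        = (1 - M.γ) * ∑ s, ∑' t, M.γ ^ t *
            (stateDist M πhat M.ρ0 t s * ∑ a, πhat s a * Adv M π s a) := by
      rw [Finset.mul_sum]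
      refine Finset.sum_congr rfl fun s _ => ?_
      unfold dvisit
      rw [mul_assoc, ← tsum_mul_right]
      congr 1
      exact tsum_congr fun t => by ring
    rw [e1, ← Summable.tsum_finsetSum (fun s _ => hsum_s s)]
    have e2 : (∑' t, ∑ s, M.γ ^ t *
          (stateDist M πhat M.ρ0 t s * ∑ a, πhat s a * Adv M π s a))
        = ∑' t, M.γ ^ t * ∑ s, stateDist M πhat M.ρ0 t s * ∑ a, πhat s a * Adv M π s a :=
      tsum_congr fun t => by rw [Finset.mul_sum]
    rw [e2, ← mul_assoc, one_div, inv_mul_cancel₀ hγne, one_mul]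
  -- telescoping function
  set F : ℕ → ℝ := fun t => M.γ ^ t * ∑ s, stateDist M πhat M.ρ0 t s * Vval M π s with hFdef
  have hstep : ∀ t, M.γ ^ t * ∑ s, stateDist M πhat M.ρ0 t s * ∑ a, πhat s a * Adv M π s a
      = M.γ ^ t * rew M πhat M.ρ0 t + (F (t+1) - F t) := by
    intro t
    rw [step_identity M π πhat hπhat t, hFdef]
    simp only []
    ring
  have hFsub_sum : Summable (fun t => F (t+1) - F t) := by
    have e : (fun t => F (t+1) - F t) = fun t =>
        M.γ ^ t * (∑ s, stateDist M πhat M.ρ0 t s * ∑ a, πhat s a * Adv M π s a)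
          - M.γ ^ t * rew M πhat M.ρ0 t := by
      funext t
      rw [hstep t]
      ring
    rw [e]
    exact hGsum.sub hRsum
  have hFtend : Filter.Tendsto F Filter.atTop (nhds 0) := by
    have hg0 : Filter.Tendsto (fun t : ℕ => (∑ s, |Vval M π s|) * M.γ ^ t)
        Filter.atTop (nhds 0) := by
      have := (tendsto_pow_atTop_nhds_zero_of_lt_one M.hγ0 M.hγ1).const_mul
        (∑ s, |Vval M π s|)
      simpa using this
    refine squeeze_zero_norm (fun t => ?_) hg0
    rw [hFdef]
    simp only []
    rw [norm_mul, Real.norm_eq_abs, Real.norm_eq_abs, abs_pow, abs_of_nonneg M.hγ0,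
      mul_comm]
    exact mul_le_mul_of_nonneg_right (hwb _ (habs t) _) (pow_nonneg M.hγ0 t)
  have htel : HasSum (fun t => F (t+1) - F t) (0 - F 0) := by
    rw [hasSum_iff_tendsto_nat_of_summable_norm (by simpa using hFsub_sum.abs)]
    have e : (fun n => ∑ i ∈ Finset.range n, (F (i+1) - F i)) = fun n => F n - F 0 := by
      funext n
      exact Finset.sum_range_sub F n
    rw [e]
    exact hFtend.sub_const (F 0)
  have hF0 : F 0 = Jret M π := by
    rw [hFdef]
    simp only []
    rw [pow_zero, one_mul]
    show ∑ s, M.ρ0 s * Vval M π s = Jret M π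
    rw [Jret, Jfrom_linear M π hπ M.ρ0]
  have hJhat : Jret M πhat = ∑' t, M.γ ^ t * rew M πhat M.ρ0 t := rfl
  rw [hA]
  calc Jret M πhat - Jret M π
      = (∑' t, M.γ ^ t * rew M πhat M.ρ0 t) + (0 - F 0) := by
        rw [← hJhat, hF0]; ring
    _ = (∑' t, M.γ ^ t * rew M πhat M.ρ0 t) + ∑' t, (F (t+1) - F t) := by
        rw [htel.tsum_eq]
    _ = ∑' t, (M.γ ^ t * rew M πhat M.ρ0 t + (F (t+1) - F t)) :=
        (Summable.tsum_add hRsum hFsub_sum).symm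
    _ = ∑' t, M.γ ^ t * ∑ s, stateDist M πhat M.ρ0 t s * ∑ a, πhat s a * Adv M π s a :=
        tsum_congr fun t => (hstep t).symm
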